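/- Let ⟨K,B,P,N⟩_R be a DPI, D a set of minimal diagnoses w.r.t. it, and P_k = ⟨dx_k, dnx_k, ∅⟩ a partition of D with dx_k ≠ ∅, dnx_k ≠ ∅ and U_{dx_k} ⊊ U_D. Then P_k is a canonical q-partition if and only if (1) D_i \ U_{dx_k} = ∅ for all D_i ∈ dx_k and (2) D_i \ U_{dx_k} ≠ ∅ for all D_i ∈ dnx_k (i.e., every diagnosis in dnx_k has a nonempty trait w.r.t. P_k). -/
import Mathlib


namespace KBDDiag

/-- A diagnosis problem instance (DPI) `⟨K,B,P,N⟩_R` over a Tarskian logic on sentences `L`. -/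
structure DPI (L : Type*) where
  /-- the entailment relation of the logic -/
  entails : Set L → L → Prop
  /-- entailment is monotonic -/
  entails_mono : ∀ (X Y : Set L) (α : L), entails X α → entails (X ∪ Y) α
  /-- entailment is idempotent -/
  entails_idem : ∀ (X A : Set L) (β : L),
    (∀ α ∈ A, entails X α) → entails (X ∪ A) β → entails X β
  /-- entailment is extensive -/
  entails_ext : ∀ (X : Set L) (α : L), α ∈ X → entails X α
  /-- the (possibly faulty) KB -/
  K : Set L
  /-- the background KB -/
  B : Set L
  /-- the positive test cases -/
  P : Set (Set L)
  /-- the negative test cases -/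
  N : Set (Set L)
  /-- requirements: `r X` means the KB `X` satisfies requirement `r` -/
  R : Set (Set L → Prop)
  K_finite : K.Finite
  B_finite : B.Finite
  K_B_disjoint : K ∩ B = ∅
  P_finite : P.Finite
  P_mem_finite : ∀ p ∈ P, Set.Finite p
  N_finite : N.Finite
  N_mem_finite : ∀ n ∈ N, Set.Finite n
  /-- violation of a requirement is monotone -/
  viol_mono : ∀ r ∈ R, ∀ X Y : Set L, X ⊆ Y → ¬ r X → ¬ r Y
  /-- requirements are preserved under adding entailed sentences -/
  sat_entailed : ∀ r ∈ R, ∀ X A : Set L, r X → (∀ α ∈ A, entails X α) → r (X ∪ A)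
  /-- the background KB satisfies every requirement -/
  B_sat : ∀ r ∈ R, r B

namespace DPI

variable {L : Type*} (d : DPI L)

/-- `X ⊨ Y` : X entails every sentence of Y. -/
def EntailsAll (X Y : Set L) : Prop := ∀ α ∈ Y, d.entails X α

/-- `U_P`, the union of all positive test cases. -/
def UP : Set L := ⋃₀ d.P

/-- `Ks` is a solution KB w.r.t. the DPI. -/
def IsSolutionKB (Ks : Set L) : Prop :=
  (∀ r ∈ d.R, r (Ks ∪ d.B)) ∧
  (∀ p ∈ d.P, d.EntailsAll (Ks ∪ d.B) p) ∧
  (∀ n ∈ d.N, ¬ d.EntailsAll (Ks ∪ d.B) n)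

/-- `D` is a diagnosis w.r.t. the DPI. -/
def IsDiagnosis (D : Set L) : Prop :=
  D ⊆ d.K ∧ d.IsSolutionKB ((d.K \ D) ∪ d.UP)

/-- `D` is a minimal diagnosis w.r.t. the DPI. -/
def IsMinDiagnosis (D : Set L) : Prop :=
  d.IsDiagnosis D ∧ ∀ D' ⊂ D, ¬ d.IsDiagnosis D'

/-- `C` is a conflict w.r.t. the DPI. -/
def IsConflict (C : Set L) : Prop :=
  C ⊆ d.K ∧ ¬ d.IsSolutionKB (C ∪ d.UP)

/-- `C` is a minimal conflict w.r.t. the DPI. -/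
def IsMinConflict (C : Set L) : Prop :=
  d.IsConflict C ∧ ∀ C' ⊂ C, ¬ d.IsConflict C'

/-- `Ks` is a maximal solution KB w.r.t. the DPI. -/
def IsMaxSolutionKB (Ks : Set L) : Prop :=
  d.IsSolutionKB Ks ∧ ¬ ∃ K' : Set L, d.IsSolutionKB K' ∧ Ks ∩ d.K ⊂ K' ∩ d.K

/-- `K*_i = (K \ D_i) ∪ B ∪ U_P`. -/
def Kstar (Di : Set L) : Set L := (d.K \ Di) ∪ d.B ∪ d.UP

/-- `X` violates some requirement in `R` or entails some negative test case. -/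
def Violates (X : Set L) : Prop :=
  (∃ r ∈ d.R, ¬ r X) ∨ (∃ n ∈ d.N, d.EntailsAll X n)

/-- `dx(X)` w.r.t. the leading diagnoses `Ds`. -/
def dxS (Ds : Set (Set L)) (X : Set L) : Set (Set L) :=
  {Di ∈ Ds | d.EntailsAll (d.Kstar Di) X}

/-- `dnx(X)` w.r.t. the leading diagnoses `Ds`. -/
def dnxS (Ds : Set (Set L)) (X : Set L) : Set (Set L) :=
  {Di ∈ Ds | d.Violates (d.Kstar Di ∪ X)}

/-- `dz(X)` w.r.t. the leading diagnoses `Ds`. -/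
def dzS (Ds : Set (Set L)) (X : Set L) : Set (Set L) :=
  Ds \ (d.dxS Ds X ∪ d.dnxS Ds X)

/-- `Q` is a query w.r.t. the leading diagnoses `Ds`. -/
def IsQuery (Ds : Set (Set L)) (Q : Set L) : Prop :=
  Q.Nonempty ∧ (d.dxS Ds Q).Nonempty ∧ (d.dnxS Ds Q).Nonempty

/-- The canonical query `Q_can(S) = (K \ U_S) ∩ (U_D \ I_D)` w.r.t. the seed `S`. -/
def Qcan (Ds S : Set (Set L)) : Set L := (d.K \ ⋃₀ S) ∩ (⋃₀ Ds \ ⋂₀ Ds)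

/-- `⟨dxp, dnxp, ∅⟩` is a canonical q-partition of `Ds`. -/
def IsCanonicalQPartition (Ds dxp dnxp : Set (Set L)) : Prop :=
  dxp ∪ dnxp = Ds ∧ dxp ∩ dnxp = ∅ ∧
  dxp.Nonempty ∧ dxp ⊂ Ds ∧
  (d.Qcan Ds dxp).Nonempty ∧
  d.dxS Ds (d.Qcan Ds dxp) = dxp ∧
  d.dnxS Ds (d.Qcan Ds dxp) = dnxp ∧
  d.dzS Ds (d.Qcan Ds dxp) = ∅

end DPI

/-- `Disc_D = U_D \ I_D`, the discrimination sentences w.r.t. `Ds`. -/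
def Disc {L : Type*} (Ds : Set (Set L)) : Set L := ⋃₀ Ds \ ⋂₀ Ds

/-- `H` is a hitting set of the collection `S`. -/
def IsHittingSet {α : Type*} (S : Set (Set α)) (H : Set α) : Prop :=
  H ⊆ ⋃₀ S ∧ ∀ s ∈ S, (H ∩ s).Nonempty

/-- `H` is a minimal hitting set of the collection `S`. -/
def IsMinHittingSet {α : Type*} (S : Set (Set α)) (H : Set α) : Prop :=
  IsHittingSet S H ∧ ∀ H' ⊂ H, ¬ IsHittingSet S H'

/-- `MHS S`, the set of all minimal hitting sets of `S`. -/
def MHS {α : Type*} (S : Set (Set α)) : Set (Set α) :=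
  {H | IsMinHittingSet S H}


namespace DPI

variable {L : Type*} (d : DPI L)

lemma violates_mono' {X Y : Set L} (h : X ⊆ Y) (hv : d.Violates X) : d.Violates Y := by
  rcases hv with ⟨r, hr, hnr⟩ | ⟨n, hn, he⟩
  · exact Or.inl ⟨r, hr, d.viol_mono r hr X Y h hnr⟩
  · refine Or.inr ⟨n, hn, fun α hα => ?_⟩
    have := d.entails_mono X Y α (he α hα)
    rwa [Set.union_eq_self_of_subset_left h] at this

lemma kstar_eq (Di : Set L) : d.Kstar Di = ((d.K \ Di) ∪ d.UP) ∪ d.B := by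
  rw [Kstar, Set.union_right_comm]

/-- A diagnosis in `dx(Q)` cannot be in `dnx(Q)`. -/
lemma not_both {Di Q : Set L} (hd : d.IsDiagnosis Di)
    (h1 : d.EntailsAll (d.Kstar Di) Q) : ¬ d.Violates (d.Kstar Di ∪ Q) := by
  have hsol := hd.2
  rintro (⟨r, hr, hnr⟩ | ⟨n, hn, he⟩)
  · apply hnr
    have hrK : r (d.Kstar Di) := by rw [kstar_eq]; exact hsol.1 r hr
    exact d.sat_entailed r hr _ Q hrK h1
  · have hK : d.EntailsAll (d.Kstar Di) n := fun β hβ =>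
      d.entails_idem _ Q β h1 (he β hβ)
    apply hsol.2.2 n hn
    rwa [kstar_eq] at hK

/-- If `Q` intersects a minimal diagnosis `Di`, then `K*_i ∪ Q` violates. -/
lemma violates_union {Di Q : Set L} (hmin : d.IsMinDiagnosis Di)
    (hne : (Di ∩ Q).Nonempty) : d.Violates (d.Kstar Di ∪ Q) := by
  obtain ⟨α, hαD, hαQ⟩ := hne
  have hsub : Di \ Q ⊂ Di :=
    ⟨Set.diff_subset, fun h => (h hαD).2 hαQ⟩
  have hnd := hmin.2 _ hsub
  have hKsub : Di \ Q ⊆ d.K := Set.diff_subset.trans hmin.1.1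
  have hns : ¬ d.IsSolutionKB ((d.K \ (Di \ Q)) ∪ d.UP) := fun h => hnd ⟨hKsub, h⟩
  have hpos : ∀ p ∈ d.P, d.EntailsAll (((d.K \ (Di \ Q)) ∪ d.UP) ∪ d.B) p := by
    intro p hp β hβ
    apply d.entails_ext
    exact Set.mem_union_left _ (Set.mem_union_right _ ⟨p, hp, hβ⟩)
  have hviol : d.Violates (((d.K \ (Di \ Q)) ∪ d.UP) ∪ d.B) := by
    by_contra hv
    apply hns
    refine ⟨fun r hr => ?_, hpos, fun n hn he => ?_⟩
    · by_contra hr2; exact hv (Or.inl ⟨r, hr, hr2⟩)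
    · exact hv (Or.inr ⟨n, hn, he⟩)
  apply d.violates_mono' _ hviol
  intro x hx
  rcases hx with (hx | hx) | hx
  · rcases hx with ⟨hxK, hxD⟩
    by_cases hxDi : x ∈ Di
    · right
      have : x ∈ Q := by
        by_contra hxQ
        exact hxD ⟨hxDi, hxQ⟩
      exact this
    · left; rw [kstar_eq]; exact Set.mem_union_left _ (Set.mem_union_left _ ⟨hxK, hxDi⟩)
  · left; rw [kstar_eq]; exact Set.mem_union_left _ (Set.mem_union_right _ hx)
  · left; rw [kstar_eq]; exact Set.mem_union_right _ hx

end DPI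

/-- A partition `⟨dxk, dnxk, ∅⟩` of `Ds` with `dxk ≠ ∅ ≠ dnxk` and
`U_dxk ⊊ U_Ds` is a canonical q-partition iff every diagnosis in `dxk` has empty trait and
every diagnosis in `dnxk` has nonempty trait. -/
theorem statement13 {L : Type*} (d : DPI L) (Ds : Set (Set L))
    (hDs : ∀ Di ∈ Ds, d.IsMinDiagnosis Di)
    (dxk dnxk : Set (Set L))
    (hpart : dxk ∪ dnxk = Ds) (hdisj : dxk ∩ dnxk = ∅)
    (hne1 : dxk.Nonempty) (hne2 : dnxk.Nonempty)
    (hU : ⋃₀ dxk ⊂ ⋃₀ Ds) :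
    d.IsCanonicalQPartition Ds dxk dnxk ↔
      ((∀ Di ∈ dxk, Di \ ⋃₀ dxk = ∅) ∧ (∀ Di ∈ dnxk, Di \ ⋃₀ dxk ≠ ∅)) := by
  have hdxkDs : dxk ⊆ Ds := hpart ▸ Set.subset_union_left
  have hdnxkDs : dnxk ⊆ Ds := hpart ▸ Set.subset_union_right
  -- entailment of the canonical query from `K*_i` when `Di ⊆ ⋃₀ dxk`
  have hdxQ' : ∀ Di : Set L, Di ⊆ ⋃₀ dxk → d.EntailsAll (d.Kstar Di) (d.Qcan Ds dxk) := by
    intro Di hDi α hα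
    apply d.entails_ext
    rw [DPI.Kstar]
    exact Set.mem_union_left _ (Set.mem_union_left _ ⟨hα.1.1, fun h => hα.1.2 (hDi h)⟩)
  have hdxQ : ∀ Di ∈ dxk, d.EntailsAll (d.Kstar Di) (d.Qcan Ds dxk) := fun Di hDi =>
    hdxQ' Di (Set.subset_sUnion_of_mem hDi)
  -- the trait of a diagnosis in dnxk is contained in the canonical query
  have htraitQ : ∀ Di ∈ dnxk, Di \ ⋃₀ dxk ⊆ d.Qcan Ds dxk := by
    intro Di hDi α hα
    have hDiDs : Di ∈ Ds := hdnxkDs hDi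
    have hDiK : Di ⊆ d.K := (hDs Di hDiDs).1.1
    obtain ⟨D0, hD0⟩ := hne1
    refine ⟨⟨hDiK hα.1, hα.2⟩, ⟨Di, hDiDs, hα.1⟩, fun hI => ?_⟩
    exact hα.2 ⟨D0, hD0, hI D0 (hdxkDs hD0)⟩
  -- a diagnosis in dnxk with nonempty trait is in dnx(Qcan)
  have hdnxQ : ∀ Di ∈ dnxk, Di \ ⋃₀ dxk ≠ ∅ →
      d.Violates (d.Kstar Di ∪ d.Qcan Ds dxk) := by
    intro Di hDi htr
    obtain ⟨α, hα⟩ := Set.nonempty_iff_ne_empty.mpr htr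
    exact d.violates_union (hDs Di (hdnxkDs hDi)) ⟨α, hα.1, htraitQ Di hDi hα⟩
  constructor
  · rintro ⟨-, -, -, -, -, hdx, -, -⟩
    refine ⟨fun Di hDi => Set.diff_eq_empty.mpr (Set.subset_sUnion_of_mem hDi),
      fun Di hDi htr => ?_⟩
    -- if the trait were empty, Di would be in dx(Qcan) = dxk, contradicting disjointness
    have hsub : Di ⊆ ⋃₀ dxk := Set.diff_eq_empty.mp htr
    have hmem : Di ∈ d.dxS Ds (d.Qcan Ds dxk) := ⟨hdnxkDs hDi, hdxQ' Di hsub⟩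
    rw [hdx] at hmem
    have : Di ∈ dxk ∩ dnxk := ⟨hmem, hDi⟩
    rw [hdisj] at this
    exact this
  · rintro ⟨-, htr⟩
    obtain ⟨D0, hD0⟩ := hne2
    have hssub : dxk ⊂ Ds := by
      refine ⟨hdxkDs, fun h => ?_⟩
      have : D0 ∈ dxk ∩ dnxk := ⟨h (hdnxkDs hD0), hD0⟩
      rw [hdisj] at this
      exact this
    have hQne : (d.Qcan Ds dxk).Nonempty := by
      obtain ⟨α, hα⟩ := Set.nonempty_iff_ne_empty.mpr (htr D0 hD0)
      exact ⟨α, htraitQ D0 hD0 hα⟩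
    have hdxeq : d.dxS Ds (d.Qcan Ds dxk) = dxk := by
      ext Di
      constructor
      · rintro ⟨hDiDs, hent⟩
        have : Di ∈ dxk ∪ dnxk := hpart ▸ hDiDs
        rcases this with h | h
        · exact h
        · exact absurd (hdnxQ Di h (htr Di h))
            (d.not_both (hDs Di hDiDs).1 hent)
      · intro hDi
        exact ⟨hdxkDs hDi, hdxQ Di hDi⟩
    have hdnxeq : d.dnxS Ds (d.Qcan Ds dxk) = dnxk := by
      ext Di
      constructor
      · rintro ⟨hDiDs, hviol⟩
        have : Di ∈ dxk ∪ dnxk := hpart ▸ hDiDs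
        rcases this with h | h
        · exact absurd hviol (d.not_both (hDs Di hDiDs).1 (hdxQ Di h))
        · exact h
      · intro hDi
        exact ⟨hdnxkDs hDi, hdnxQ Di hDi (htr Di hDi)⟩
    refine ⟨hpart, hdisj, hne1, hssub, hQne, hdxeq, hdnxeq, ?_⟩
    rw [DPI.dzS, hdxeq, hdnxeq, hpart, Set.diff_self]

end KBDDiag
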